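/- Cauchy criterion for quasi-sure convergence: Let E be a regular sublinear expectation on the space X of bounded measurable real-valued functions on (Ω, F), with upper capacity C(A) := E(1_A). For a sequence {ξ_i}_{i≥1} ⊂ X with partial sums S_n := Σ_{i=1}^{n} ξ_i, the sequence {S_n} converges pointwise, outside a C-polar set, to some finite-valued random variable if and only if for every ε > 0, lim_{n→∞} C( { ω : sup_{i,j > n} |Σ_{m=i}^{j} ξ_m(ω)| > ε } ) = 0. -/

import Mathlib

open MeasureTheory Set Filter Topology Classical

/-- The space of bounded measurable real-valued functions on `Ω`, as a submodule of `Ω → ℝ`. -/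
def BM (Ω : Type*) [MeasurableSpace Ω] : Submodule ℝ (Ω → ℝ) where
  carrier := {f | Measurable f ∧ ∃ M : ℝ, ∀ ω, |f ω| ≤ M}
  zero_mem' := ⟨measurable_const, 0, by simp⟩
  add_mem' := by
    rintro f g ⟨hf, Mf, hMf⟩ ⟨hg, Mg, hMg⟩
    exact ⟨hf.add hg, Mf + Mg, fun ω => (abs_add_le _ _).trans (add_le_add (hMf ω) (hMg ω))⟩
  smul_mem' := by
    rintro c f ⟨hf, Mf, hMf⟩
    refine ⟨hf.const_smul c, |c| * Mf, fun ω => ?_⟩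
    simp only [Pi.smul_apply, smul_eq_mul, abs_mul]
    exact mul_le_mul_of_nonneg_left (hMf ω) (abs_nonneg c)

variable {Ω : Type*} [MeasurableSpace Ω]

lemma mem_BM {f : Ω → ℝ} (hf : Measurable f) (M : ℝ) (hM : ∀ ω, |f ω| ≤ M) : f ∈ BM Ω :=
  ⟨hf, M, hM⟩

lemma BM.measurable (ξ : BM Ω) : Measurable (ξ : Ω → ℝ) := ξ.2.1

lemma BM.bounded (ξ : BM Ω) : ∃ M : ℝ, ∀ ω, |(ξ : Ω → ℝ) ω| ≤ M := ξ.2.2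

/-- A sublinear expectation on the space of bounded measurable functions. -/
structure SLE (Ω : Type*) [MeasurableSpace Ω] where
  E : BM Ω → ℝ
  mono : ∀ ξ η : BM Ω, (∀ ω, (η : Ω → ℝ) ω ≤ (ξ : Ω → ℝ) ω) → E η ≤ E ξ
  const_preserve : ∀ (c : ℝ) (h : (fun _ : Ω => c) ∈ BM Ω), E ⟨fun _ => c, h⟩ = c
  subadd : ∀ ξ η : BM Ω, E (ξ + η) ≤ E ξ + E η
  pos_homog : ∀ (c : ℝ), 0 ≤ c → ∀ ξ : BM Ω, E (c • ξ) = c * E ξ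

/-- The constant function as an element of `BM Ω`. -/
def constBM (Ω : Type*) [MeasurableSpace Ω] (c : ℝ) : BM Ω :=
  ⟨fun _ => c, mem_BM measurable_const |c| fun _ => le_refl _⟩

/-- The indicator function of a measurable set as an element of `BM Ω`. -/
noncomputable def indBM {Ω : Type*} [MeasurableSpace Ω] (A : Set Ω) (hA : MeasurableSet A) : BM Ω :=
  ⟨A.indicator fun _ => 1,
    mem_BM (measurable_const.indicator hA) 1 fun ω => by
      by_cases h : ω ∈ A <;> simp [Set.indicator_apply, h]⟩

/-- The product of two bounded measurable functions. -/
noncomputable def mulBM (ξ η : BM Ω) : BM Ω := by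
  refine ⟨fun ω => (ξ : Ω → ℝ) ω * (η : Ω → ℝ) ω, ?_⟩
  obtain ⟨Mf, hMf⟩ := BM.bounded ξ
  obtain ⟨Mg, hMg⟩ := BM.bounded η
  refine mem_BM ((BM.measurable ξ).mul (BM.measurable η)) (max Mf 0 * max Mg 0) fun ω => ?_
  rw [abs_mul]
  exact mul_le_mul ((hMf ω).trans (le_max_left _ _)) ((hMg ω).trans (le_max_left _ _))
    (abs_nonneg _) (le_max_right _ _)

/-- The upper capacity associated to a sublinear expectation: `C(A) = E(1_A)` for measurable `A`
(junk value `0` on non-measurable sets). -/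
noncomputable def SLE.cap (𝔼 : SLE Ω) (A : Set Ω) : ℝ :=
  if h : MeasurableSet A then 𝔼.E (indBM A h) else 0

/-- The lower capacity associated to a sublinear expectation: `c(A) = -E(-1_A)` for measurable `A`
(junk value `0` on non-measurable sets). -/
noncomputable def SLE.lcap (𝔼 : SLE Ω) (A : Set Ω) : ℝ :=
  if h : MeasurableSet A then -𝔼.E (-(indBM A h)) else 0

/-- A linear expectation dominated by the sublinear expectation `𝔼`. -/
def Dominated (𝔼 : SLE Ω) (L : BM Ω →ₗ[ℝ] ℝ) : Prop := ∀ ξ : BM Ω, L ξ ≤ 𝔼.E ξ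

/-- `ξ` and `η` are uncorrelated with respect to `𝔼` if `L(ξη) = L(ξ)L(η)` for every
linear expectation `L` dominated by `𝔼`. -/
def Uncorrelated (𝔼 : SLE Ω) (ξ η : BM Ω) : Prop :=
  ∀ L : BM Ω →ₗ[ℝ] ℝ, Dominated 𝔼 L → L (mulBM ξ η) = L ξ * L η

/-- `𝔼` is regular: if `ξ n ↓ 0` pointwise then `𝔼.E (ξ n) ↓ 0`. -/
def SLE.Regular (𝔼 : SLE Ω) : Prop :=
  ∀ ξ : ℕ → BM Ω, (∀ ω, Antitone fun n => (ξ n : Ω → ℝ) ω) →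
    (∀ ω, Tendsto (fun n => (ξ n : Ω → ℝ) ω) atTop (𝓝 0)) →
    Tendsto (fun n => 𝔼.E (ξ n)) atTop (𝓝 0)

/-- The σ-field generated by `ξ a, …, ξ b`. -/
def sigmaGen (ξ : ℕ → BM Ω) (a b : ℕ) : MeasurableSpace Ω :=
  ⨆ i ∈ Set.Icc a b, MeasurableSpace.comap (fun ω => (ξ i : Ω → ℝ) ω) inferInstance

/-- `{ξ_n}_{n ≥ 1}` is an independent sequence under `𝔼`: pairwise uncorrelated, and
`C(A ∩ B) ≤ C(A) C(B)` whenever `A ∈ σ(ξ_1, …, ξ_m)` and `B ∈ σ(ξ_{m+1}, …, ξ_n)`, `m < n`. -/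
def IndepSeq (𝔼 : SLE Ω) (ξ : ℕ → BM Ω) : Prop :=
  (∀ i j, 1 ≤ i → 1 ≤ j → i ≠ j → Uncorrelated 𝔼 (ξ i) (ξ j)) ∧
  ∀ m n : ℕ, 1 ≤ m → m < n → ∀ A B : Set Ω,
    MeasurableSet[sigmaGen ξ 1 m] A → MeasurableSet[sigmaGen ξ (m + 1) n] B →
    𝔼.cap (A ∩ B) ≤ 𝔼.cap A * 𝔼.cap B

/-- Assumption (H₀): for every disjoint measurable cover `{A_n}` of `Ω`,
the series `Σ C(A_n)` has bounded partial sums. -/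
def H0 (𝔼 : SLE Ω) : Prop :=
  ∀ A : ℕ → Set Ω, (∀ n, MeasurableSet (A n)) → Pairwise (Function.onFun Disjoint A) →
    (⋃ n, A n) = Set.univ → ∃ M : ℝ, ∀ N : ℕ, ∑ n ∈ Finset.range N, 𝔼.cap (A n) < M


section Aux

lemma SLE.E_zero (𝔼 : SLE Ω) : 𝔼.E 0 = 0 := by
  have h : (fun _ : Ω => (0:ℝ)) ∈ BM Ω := (BM Ω).zero_mem
  have h2 := 𝔼.const_preserve 0 h
  have : (0 : BM Ω) = ⟨fun _ => (0:ℝ), h⟩ := rfl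
  rw [this]; exact h2

lemma SLE.cap_eq (𝔼 : SLE Ω) {A : Set Ω} (hA : MeasurableSet A) :
    𝔼.cap A = 𝔼.E (indBM A hA) := dif_pos hA

lemma SLE.cap_nonneg (𝔼 : SLE Ω) (A : Set Ω) : 0 ≤ 𝔼.cap A := by
  unfold SLE.cap
  split
  · rename_i hA
    have := 𝔼.mono (indBM A hA) 0 (fun ω => by
      simpa [indBM] using Set.indicator_nonneg (fun _ _ => zero_le_one) ω)
    rw [𝔼.E_zero] at this
    exact this
  · exact le_refl _

lemma SLE.cap_mono (𝔼 : SLE Ω) {A B : Set Ω} (hA : MeasurableSet A) (hB : MeasurableSet B)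
    (hAB : A ⊆ B) : 𝔼.cap A ≤ 𝔼.cap B := by
  rw [𝔼.cap_eq hA, 𝔼.cap_eq hB]
  refine 𝔼.mono _ _ fun ω => ?_
  exact Set.indicator_le_indicator_of_subset hAB (fun _ => zero_le_one) ω

lemma SLE.cap_union_le (𝔼 : SLE Ω) {A B : Set Ω} (hA : MeasurableSet A) (hB : MeasurableSet B) :
    𝔼.cap (A ∪ B) ≤ 𝔼.cap A + 𝔼.cap B := by
  rw [𝔼.cap_eq (hA.union hB), 𝔼.cap_eq hA, 𝔼.cap_eq hB]
  refine le_trans (𝔼.mono (indBM A hA + indBM B hB) _ fun ω => ?_) (𝔼.subadd _ _)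
  show (A ∪ B).indicator (fun _ => (1:ℝ)) ω ≤ A.indicator (fun _ => (1:ℝ)) ω + B.indicator (fun _ => (1:ℝ)) ω
  by_cases hωA : ω ∈ A <;> by_cases hωB : ω ∈ B <;>
    simp [Set.indicator_apply, hωA, hωB]

/-- downward continuity of the capacity at ∅, from regularity. -/
lemma SLE.cap_tendsto_zero (𝔼 : SLE Ω) (hreg : 𝔼.Regular) (D : ℕ → Set Ω)
    (hD : ∀ n, MeasurableSet (D n)) (hanti : Antitone D) (hempty : ∀ ω, ∃ n, ω ∉ D n) :
    Tendsto (fun n => 𝔼.cap (D n)) atTop (𝓝 0) := by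
  have heq : (fun n => 𝔼.cap (D n)) = fun n => 𝔼.E (indBM (D n) (hD n)) :=
    funext fun n => 𝔼.cap_eq (hD n)
  rw [heq]
  refine hreg (fun n => indBM (D n) (hD n)) (fun ω m n hmn => ?_) (fun ω => ?_)
  · exact Set.indicator_le_indicator_of_subset (hanti hmn) (fun _ => zero_le_one) ω
  · obtain ⟨n0, hn0⟩ := hempty ω
    refine tendsto_const_nhds.congr' ?_
    filter_upwards [eventually_ge_atTop n0] with n hn
    have : ω ∉ D n := fun hω => hn0 (hanti hn hω)
    simp [indBM, Set.indicator_apply, this]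

lemma sum_Icc_sub (f : ℕ → ℝ) {i j : ℕ} (hi : 1 ≤ i) (hij : i ≤ j) :
    ∑ m ∈ Finset.Icc i j, f m =
      (∑ m ∈ Finset.Icc 1 j, f m) - ∑ m ∈ Finset.Icc 1 (i - 1), f m := by
  have h1 : Finset.Icc 1 j = Finset.Ioc 0 j := by rw [← Finset.Icc_add_one_left_eq_Ioc, zero_add]
  have h2 : Finset.Icc 1 (i-1) = Finset.Ioc 0 (i-1) := by rw [← Finset.Icc_add_one_left_eq_Ioc, zero_add]
  have h3 : Finset.Icc i j = Finset.Ioc (i-1) j := by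
    rw [← Finset.Icc_add_one_left_eq_Ioc]; congr 1; omega
  have := Finset.sum_Ioc_consecutive f (Nat.zero_le (i-1)) (le_trans (Nat.pred_le i) hij)
  rw [h1, h2, h3]
  linarith

lemma measurable_cauchySet (ξ : ℕ → BM Ω) (ε : ℝ) (n : ℕ) :
    MeasurableSet {ω : Ω | ∃ i j, n < i ∧ n < j ∧ ε < |∑ m ∈ Finset.Icc i j, (ξ m : Ω → ℝ) ω|} := by
  have : {ω : Ω | ∃ i j, n < i ∧ n < j ∧ ε < |∑ m ∈ Finset.Icc i j, (ξ m : Ω → ℝ) ω|} =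
      ⋃ (i) (j) (_ : n < i) (_ : n < j),
        {ω : Ω | ε < |∑ m ∈ Finset.Icc i j, (ξ m : Ω → ℝ) ω|} := by
    ext ω; simp only [Set.mem_setOf_eq, Set.mem_iUnion]; tauto
  rw [this]
  refine MeasurableSet.iUnion fun i => MeasurableSet.iUnion fun j =>
    MeasurableSet.iUnion fun _ => MeasurableSet.iUnion fun _ => ?_
  have hmeas : Measurable fun ω => |∑ m ∈ Finset.Icc i j, (ξ m : Ω → ℝ) ω| :=
    (Finset.measurable_sum _ fun m _ => BM.measurable (ξ m)).abs
  exact measurableSet_lt measurable_const hmeas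

lemma SLE.cap_empty (𝔼 : SLE Ω) : 𝔼.cap (∅ : Set Ω) = 0 := by
  rw [𝔼.cap_eq MeasurableSet.empty]
  have : indBM (∅ : Set Ω) MeasurableSet.empty = 0 := by
    apply Subtype.ext
    funext ω
    simp [indBM]
  rw [this, 𝔼.E_zero]

end Aux

/-- Cauchy criterion for quasi-sure convergence of the partial sums `S_n`
under a regular sublinear expectation. -/
theorem qs_convergence_cauchy_criterion (𝔼 : SLE Ω) (hreg : 𝔼.Regular) (ξ : ℕ → BM Ω) :
    (∃ N : Set Ω, MeasurableSet N ∧ 𝔼.cap N = 0 ∧ ∀ ω ∉ N,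
        ∃ l : ℝ, Tendsto (fun n => ∑ i ∈ Finset.Icc 1 n, (ξ i : Ω → ℝ) ω) atTop (𝓝 l)) ↔
    (∀ ε > 0, Tendsto (fun n : ℕ =>
        𝔼.cap {ω | ∃ i j, n < i ∧ n < j ∧ ε < |∑ m ∈ Finset.Icc i j, (ξ m : Ω → ℝ) ω|})
      atTop (𝓝 0)) := by
  constructor
  · rintro ⟨N, hNmeas, hNcap, hconv⟩ ε hε
    set A : ℕ → Set Ω := fun n =>
      {ω | ∃ i j, n < i ∧ n < j ∧ ε < |∑ m ∈ Finset.Icc i j, (ξ m : Ω → ℝ) ω|} with hA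
    have hAmeas : ∀ n, MeasurableSet (A n) := fun n => measurable_cauchySet ξ ε n
    have hAanti : Antitone A := by
      intro m n hmn ω hω
      obtain ⟨i, j, hi, hj, h⟩ := hω
      exact ⟨i, j, lt_of_le_of_lt hmn hi, lt_of_le_of_lt hmn hj, h⟩
    have hDmeas : ∀ n, MeasurableSet (A n \ N) := fun n => (hAmeas n).diff hNmeas
    have hDanti : Antitone fun n => A n \ N := fun m n h =>
      Set.diff_subset_diff_left (hAanti h)
    have hempty : ∀ ω, ∃ n, ω ∉ A n \ N := by
      intro ω
      by_cases hωN : ω ∈ N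
      · exact ⟨0, fun h => h.2 hωN⟩
      · obtain ⟨l, hl⟩ := hconv ω hωN
        have hcauchy := hl.cauchySeq
        rw [Metric.cauchySeq_iff] at hcauchy
        obtain ⟨n, hn⟩ := hcauchy ε hε
        refine ⟨n, fun h => ?_⟩
        obtain ⟨i, j, hi, hj, habs⟩ := h.1
        rcases le_or_gt i j with hij | hij
        · have hi1 : 1 ≤ i := by omega
          rw [sum_Icc_sub (fun m => (ξ m : Ω → ℝ) ω) hi1 hij] at habs
          have hd := hn j (by omega) (i - 1) (by omega)
          rw [Real.dist_eq] at hd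
          linarith
        · rw [Finset.Icc_eq_empty (by omega)] at habs
          simp only [Finset.sum_empty, abs_zero] at habs
          linarith
    have h0 := 𝔼.cap_tendsto_zero hreg _ hDmeas hDanti hempty
    refine squeeze_zero (fun n => 𝔼.cap_nonneg _) (fun n => ?_) h0
    calc 𝔼.cap (A n) ≤ 𝔼.cap ((A n \ N) ∪ N) := by
          refine 𝔼.cap_mono (hAmeas n) ((hDmeas n).union hNmeas) fun ω hω => ?_
          by_cases h : ω ∈ N
          exacts [Or.inr h, Or.inl ⟨hω, h⟩]
      _ ≤ 𝔼.cap (A n \ N) + 𝔼.cap N := 𝔼.cap_union_le (hDmeas n) hNmeas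
      _ = 𝔼.cap (A n \ N) := by rw [hNcap, add_zero]
  · intro hcap
    set A : ℝ → ℕ → Set Ω := fun ε n =>
      {ω | ∃ i j, n < i ∧ n < j ∧ ε < |∑ m ∈ Finset.Icc i j, (ξ m : Ω → ℝ) ω|} with hA
    have hAmeas : ∀ ε n, MeasurableSet (A ε n) := fun ε n => measurable_cauchySet ξ ε n
    set B : ℕ → Set Ω := fun k => ⋂ n, A (1 / (k + 1)) n with hB
    have hBmeas : ∀ k, MeasurableSet (B k) := fun k => MeasurableSet.iInter fun n => hAmeas _ n
    have hBcap : ∀ k, 𝔼.cap (B k) = 0 := by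
      intro k
      have hpos : (0 : ℝ) < 1 / (k + 1) := by positivity
      have hle : ∀ n, 𝔼.cap (B k) ≤ 𝔼.cap (A (1 / (k + 1)) n) := fun n =>
        𝔼.cap_mono (hBmeas k) (hAmeas _ n) (Set.iInter_subset _ n)
      exact le_antisymm (ge_of_tendsto' (hcap _ hpos) hle) (𝔼.cap_nonneg _)
    set NK : ℕ → Set Ω := fun K => ⋃ k < K, B k with hNK
    have hNKmeas : ∀ K, MeasurableSet (NK K) := fun K =>
      MeasurableSet.biUnion (Set.to_countable _) fun k _ => hBmeas k
    have hNKcap : ∀ K, 𝔼.cap (NK K) = 0 := by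
      intro K
      induction K with
      | zero =>
        have : NK 0 = ∅ := by simp [hNK]
        rw [this, 𝔼.cap_empty]
      | succ K ih =>
        have hstep : NK (K + 1) = NK K ∪ B K := Set.biUnion_lt_succ B K
        refine le_antisymm ?_ (𝔼.cap_nonneg _)
        rw [hstep]
        calc 𝔼.cap (NK K ∪ B K) ≤ 𝔼.cap (NK K) + 𝔼.cap (B K) :=
              𝔼.cap_union_le (hNKmeas K) (hBmeas K)
          _ = 0 := by rw [ih, hBcap, add_zero]
    refine ⟨⋃ k, B k, MeasurableSet.iUnion hBmeas, ?_, ?_⟩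
    · have hNmeas : MeasurableSet (⋃ k, B k) := MeasurableSet.iUnion hBmeas
      have hDmeas : ∀ K, MeasurableSet ((⋃ k, B k) \ NK K) := fun K =>
        hNmeas.diff (hNKmeas K)
      have hDanti : Antitone fun K => (⋃ k, B k) \ NK K := by
        intro K K' hKK'
        refine Set.diff_subset_diff_right ?_
        exact Set.biUnion_subset_biUnion_left fun k hk => lt_of_lt_of_le hk hKK'
      have hempty : ∀ ω, ∃ K, ω ∉ (⋃ k, B k) \ NK K := by
        intro ω
        by_cases hω : ω ∈ ⋃ k, B k
        · obtain ⟨k, hk⟩ := Set.mem_iUnion.mp hω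
          exact ⟨k + 1, fun h => h.2 (Set.mem_biUnion (Nat.lt_succ_self k) hk)⟩
        · exact ⟨0, fun h => hω h.1⟩
      have htend := 𝔼.cap_tendsto_zero hreg _ hDmeas hDanti hempty
      have hle : ∀ K, 𝔼.cap (⋃ k, B k) ≤ 𝔼.cap ((⋃ k, B k) \ NK K) := by
        intro K
        calc 𝔼.cap (⋃ k, B k) ≤ 𝔼.cap (NK K ∪ ((⋃ k, B k) \ NK K)) := by
              refine 𝔼.cap_mono hNmeas ((hNKmeas K).union (hDmeas K)) fun ω hω => ?_
              by_cases h : ω ∈ NK K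
              exacts [Or.inl h, Or.inr ⟨hω, h⟩]
          _ ≤ 𝔼.cap (NK K) + 𝔼.cap ((⋃ k, B k) \ NK K) :=
              𝔼.cap_union_le (hNKmeas K) (hDmeas K)
          _ = 𝔼.cap ((⋃ k, B k) \ NK K) := by rw [hNKcap, zero_add]
      exact le_antisymm (ge_of_tendsto' htend hle) (𝔼.cap_nonneg _)
    · intro ω hω
      have hnotB : ∀ k : ℕ, ∃ n : ℕ, ∀ i j, n < i → n < j →
          |∑ m ∈ Finset.Icc i j, (ξ m : Ω → ℝ) ω| ≤ 1 / (k + 1) := by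
        intro k
        have : ω ∉ B k := fun h => hω (Set.mem_iUnion.mpr ⟨k, h⟩)
        rw [hB, Set.mem_iInter] at this
        push_neg at this
        obtain ⟨n, hn⟩ := this
        refine ⟨n, fun i j hi hj => ?_⟩
        by_contra hgt
        push_neg at hgt
        exact hn ⟨i, j, hi, hj, hgt⟩
      have hcauchy : CauchySeq fun n => ∑ i ∈ Finset.Icc 1 n, (ξ i : Ω → ℝ) ω := by
        rw [Metric.cauchySeq_iff]
        intro ε hε
        obtain ⟨k, hk⟩ := exists_nat_one_div_lt hε
        obtain ⟨n, hn⟩ := hnotB k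
        have key : ∀ p q : ℕ, n + 1 ≤ q → q ≤ p →
            |(∑ i ∈ Finset.Icc 1 p, (ξ i : Ω → ℝ) ω) -
              ∑ i ∈ Finset.Icc 1 q, (ξ i : Ω → ℝ) ω| ≤ 1 / (k + 1) := by
          intro p q hq hqp
          rcases eq_or_lt_of_le hqp with rfl | hlt
          · simp; positivity
          · have hsum := sum_Icc_sub (fun m => (ξ m : Ω → ℝ) ω) (by omega : 1 ≤ q + 1)
              (by omega : q + 1 ≤ p)
            have hq1 : q + 1 - 1 = q := by omega
            rw [hq1] at hsum
            rw [← hsum]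
            exact hn (q + 1) p (by omega) (by omega)
        refine ⟨n + 1, fun p hp q hq => ?_⟩
        rw [Real.dist_eq]
        rcases le_total q p with h | h
        · exact lt_of_le_of_lt (key p q hq h) hk
        · rw [abs_sub_comm]
          exact lt_of_le_of_lt (key q p hp h) hk
      exact cauchySeq_tendsto_of_complete hcauchy
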